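/- If V is a simple coherent sheaf on a proper variety Y over an algebraically closed field k, G is a finite cyclic group of order n acting on Y, σ generates G, and there exists an isomorphism φ : V ≅ σ*V, then there exists λ ∈ k* and a family of isomorphisms ψ_{σ^l} : V ≅ (σ^l)*V (given by ψ_{σ^l} = λ^{-l/n}·φ_{σ^l} where φ_{σ^l} is the l-fold composite of pullbacks of φ) forming a G-linearization, i.e. satisfying the cocycle condition (σ^l)*ψ_{σ^{l'}} ∘ ψ_{σ^l} = ψ_{σ^{l+l'}}. -/
import Mathlib


open CategoryTheory

/-!
Statement 1 (Lemma 4.5, descent along cyclic étale covers): let `V` be a simple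
coherent sheaf on a proper variety `Y` over an algebraically closed field `k`
(encoded: `V` is an object of the `k`-linear category `C` of coherent sheaves with
`End(V) = k`), and let a cyclic group `G = ⟨σ⟩` of order `n` act on `Y`, with
pullback functors `F l = (σ^l)^*` (so `F 0 = 𝟭`, `F b ⋙ F a = F (a+b)`, acting
`k`-linearly on morphisms, with an identification `ι : (σ^n)^* V ≅ V`).  Given an
isomorphism `φ : V ≅ σ^*V`, define inductively `φ_{σ^l} = σ^*(φ_{σ^{l-1}}) ∘ φ`
(the family `φfam`).  Then the wrap-around automorphism `ι ∘ φ_{σ^n}` of `V` is a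
scalar `λ ∈ kˣ`, there is an `n`-th root `μ` of `λ` in `k` (as `k` is
algebraically closed), and the family `ψ_{σ^l} := μ^{-l} · φ_{σ^l}` is a
`G`-linearization: it satisfies the cocycle condition
`(σ^l)^*ψ_{σ^{l'}} ∘ ψ_{σ^l} = ψ_{σ^{l+l'}}` for `l + l' < n`, and at the
wrap-around `l + l' = n` it composes with `ι` to the identity of `V`.
-/
theorem cyclic_descent_linearization
    {k : Type} [Field k] [IsAlgClosed k]
    {C : Type} [Category C] [Preadditive C] [CategoryTheory.Linear k C]
    (n : ℕ) (hn : 0 < n)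
    (F : ℕ → (C ⥤ C)) (V : C)
    (hid : F 0 = 𝟭 C)
    (hcomp : ∀ a b : ℕ, F b ⋙ F a = F (a + b))
    (hlin : ∀ (l : ℕ) (X Y : C) (f : X ⟶ Y) (c : k),
      (F l).map (c • f) = c • (F l).map f)
    (hsimple : ∀ f : V ⟶ V, ∃ c : k, f = c • 𝟙 V)
    (φ : V ≅ (F 1).obj V)
    (ι : (F n).obj V ≅ V)
    (φfam : ∀ l : ℕ, V ≅ (F l).obj V)
    (hφ0 : (φfam 0).hom =
      eqToHom (congrArg (fun H : C ⥤ C => H.obj V) hid).symm)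
    (hφ1 : φfam 1 = φ)
    (hφsucc : ∀ l : ℕ, (φfam (l + 1)).hom =
      φ.hom ≫ (F 1).map ((φfam l).hom) ≫
        eqToHom ((congrArg (fun H : C ⥤ C => H.obj V) (hcomp 1 l)).trans
          (congrArg (fun m : ℕ => (F m).obj V) (Nat.add_comm 1 l)))) :
    ∃ lam mu : kˣ,
      ((mu : k) ^ n = (lam : k)) ∧
      ((φfam n).hom ≫ ι.hom = (lam : k) • 𝟙 V) ∧
      (∀ l l' : ℕ, l + l' < n →
        ((((mu⁻¹ : kˣ) : k) ^ l • (φfam l).hom) ≫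
            (F l).map ((((mu⁻¹ : kˣ) : k) ^ l' • (φfam l').hom)) ≫
            eqToHom (congrArg (fun H : C ⥤ C => H.obj V) (hcomp l l')) =
          (((mu⁻¹ : kˣ) : k) ^ (l + l') • (φfam (l + l')).hom))) ∧
      (∀ (l l' : ℕ) (h : l + l' = n),
        ((((mu⁻¹ : kˣ) : k) ^ l • (φfam l).hom) ≫
            (F l).map ((((mu⁻¹ : kˣ) : k) ^ l' • (φfam l').hom)) ≫
            eqToHom (congrArg (fun H : C ⥤ C => H.obj V) (hcomp l l')) ≫
            eqToHom (congrArg (fun m : ℕ => (F m).obj V) h) ≫ ι.hom =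
          𝟙 V)) := by

  have hA : ∀ l : ℕ, (φfam l).hom ≫ (F l).map φ.hom ≫
      eqToHom (congrArg (fun H : C ⥤ C => H.obj V) (hcomp l 1)) =
      (φfam (l + 1)).hom := by
    intro l
    induction l with
    | zero =>
      rw [hφ0, hφ1, Functor.congr_hom hid φ.hom]
      simp
    | succ l ih =>
      have hq : F l ⋙ F 1 = F (l + 1) :=
        (hcomp 1 l).trans (congrArg F (Nat.add_comm 1 l))
      rw [hφsucc l, hφsucc (l + 1), Functor.congr_hom hq.symm φ.hom]
      have ih' : (φfam l).hom ≫ (F l).map φ.hom = (φfam (l + 1)).hom ≫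
          eqToHom (congrArg (fun H : C ⥤ C => H.obj V) (hcomp l 1)).symm := by
        rw [← ih]; simp
      simp only [Category.assoc, eqToHom_trans, eqToHom_trans_assoc, eqToHom_refl,
        Category.id_comp, Functor.comp_map, ← Functor.map_comp, ← Functor.map_comp_assoc]
      rw [ih']
      simp [eqToHom_map]
  have key : ∀ l l' : ℕ, (φfam l).hom ≫ (F l).map ((φfam l').hom) ≫
      eqToHom (congrArg (fun H : C ⥤ C => H.obj V) (hcomp l l')) =
      (φfam (l + l')).hom := by
    intro l l'
    induction l' with
    | zero =>
      have : (φfam l).hom ≫ (F l).map ((φfam 0).hom) ≫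
          eqToHom (congrArg (fun H : C ⥤ C => H.obj V) (hcomp l 0)) =
          (φfam l).hom := by
        rw [hφ0, eqToHom_map]
        simp
      exact this
    | succ l' ih =>
      have step : (φfam l).hom ≫ (F l).map ((φfam (l' + 1)).hom) ≫
          eqToHom (congrArg (fun H : C ⥤ C => H.obj V) (hcomp l (l' + 1))) =
          (φfam (l + l' + 1)).hom := by
        rw [← hA l']
        simp only [Functor.map_comp, Category.assoc, eqToHom_map, ← Functor.comp_map]
        rw [Functor.congr_hom (hcomp l l') φ.hom]
        simp only [Category.assoc, eqToHom_trans]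
        rw [reassoc_of% ih]
        exact hA (l + l')
      exact step
  have hunit : ∃ lam : kˣ, (φfam n).hom ≫ ι.hom = (lam : k) • 𝟙 V := by
    obtain ⟨c, hc⟩ := hsimple ((φfam n).hom ≫ ι.hom)
    by_cases hz : c = 0
    · refine ⟨1, ?_⟩
      have h0 : 𝟙 V = (0 : V ⟶ V) := by
        have h1 : 𝟙 V = ((φfam n).hom ≫ ι.hom) ≫ (ι.inv ≫ (φfam n).inv) := by simp
        rw [h1, hc, hz]; simp
      rw [hc, hz]; simp [h0]
    · exact ⟨Units.mk0 c hz, hc⟩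
  obtain ⟨lam, hlam⟩ := hunit
  obtain ⟨m, hm⟩ := IsAlgClosed.exists_pow_nat_eq (lam : k) hn
  have hm0 : m ≠ 0 := by
    intro h
    rw [h, zero_pow hn.ne'] at hm
    exact lam.ne_zero hm.symm
  refine ⟨lam, Units.mk0 m hm0, hm, hlam, ?_, ?_⟩
  · intro l l' _
    simp only [hlin, Linear.smul_comp, Linear.comp_smul, smul_smul]
    rw [key l l', ← pow_add, Nat.add_comm l' l]
  · intro l l' h
    subst h
    simp only [hlin, Linear.smul_comp, Linear.comp_smul, smul_smul, eqToHom_refl,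
      Category.id_comp]
    rw [reassoc_of% (key l l'), hlam, smul_smul, ← pow_add, Nat.add_comm l' l]
    have hsc : ((Units.mk0 m hm0)⁻¹ : kˣ) ^ (l + l') * (lam : k) = 1 := by
      rw [← hm, Units.val_inv_eq_inv_val, Units.val_mk0, inv_pow]
      exact inv_mul_cancel₀ (pow_ne_zero _ hm0)
    rw [hsc, one_smul]
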